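/- Let 𝔉 be a union-closed family of subsets of a finite set X, let a ∈ X, and let g ∈ 𝔉 with a ∉ g. Then there exists a maximal element η of Fib(g) with a ∉ η if and only if there exists h ∈ 𝔉 with a ∈ h such that h covers g in 𝔉 (i.e. g ⊊ h and there is no f ∈ 𝔉 with g ⊊ f ⊊ h). -/

import Mathlib

open Finset

variable {α : Type*} [DecidableEq α]

/-- A family is union-closed if it is closed under pairwise unions. -/
def UnionClosed (F : Finset (Finset α)) : Prop := ∀ f ∈ F, ∀ g ∈ F, f ∪ g ∈ F

/-- One rising step: φ_{S,a}(z) = z ∪ {a} if z ∪ {a} ∉ S, and z otherwise. -/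
def riseStep (S : Finset (Finset α)) (a : α) (z : Finset α) : Finset α :=
  if insert a z ∈ S then z else insert a z

/-- Iterated rising function along a word (list of letters): at each step the
current family is replaced by its image and the next letter is risen. -/
def riseWord (S : Finset (Finset α)) : List α → Finset α → Finset α
  | [], z => z
  | a :: u, z => riseWord (S.image (riseStep S a)) u (riseStep S a z)

/-- The section of a family along (a prefix of) a word. -/
def riseSections (S : Finset (Finset α)) : List α → Finset (Finset α)
  | [] => S
  | a :: u => riseSections (S.image (riseStep S a)) u

/-- The set of minimal elements of a family (under inclusion). -/
def minsF (F : Finset (Finset α)) : Finset (Finset α) :=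
  F.filter fun h => ∀ g ∈ F, g ⊆ h → g = h

/-- The operator z ↦ z* = ⋃ { h ∈ F : h ⊆ z }. -/
def starOp (F : Finset (Finset α)) (z : Finset α) : Finset α :=
  (F.filter fun f => f ⊆ z).sup id

/-- The fiber Fib(g) = { h ∈ min(F)↑ : h* = g }. -/
def FibS (F : Finset (Finset α)) (g : Finset α) : Set (Finset α) :=
  {h | (∃ m ∈ minsF F, m ⊆ h) ∧ starOp F h = g}

lemma le_starOp {α : Type*} [DecidableEq α] {F : Finset (Finset α)} {f h : Finset α}
    (hf : f ∈ F) (hfh : f ⊆ h) : f ⊆ starOp F h := by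
  have : f ∈ F.filter (fun f => f ⊆ h) := Finset.mem_filter.2 ⟨hf, hfh⟩
  exact Finset.le_sup (f := id) this

lemma starOp_le {α : Type*} [DecidableEq α] {F : Finset (Finset α)} {h t : Finset α}
    (ht : ∀ f ∈ F, f ⊆ h → f ⊆ t) : starOp F h ⊆ t :=
  Finset.sup_le fun f hf => ht f (Finset.mem_filter.1 hf).1 (Finset.mem_filter.1 hf).2

/-- Lemma 4.8: for g ∈ 𝔉 with a ∉ g, there is a maximal element η of Fib(g)
with a ∉ η iff there is h ∈ 𝔉 with a ∈ h covering g. -/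
theorem stmt_10 {α : Type*} [DecidableEq α] [Fintype α]
    (F : Finset (Finset α)) (hF : UnionClosed F)
    (a : α) (g : Finset α) (hg : g ∈ F) (hag : a ∉ g) :
    (∃ η ∈ FibS F g, a ∉ η ∧ ∀ η' ∈ FibS F g, η ⊆ η' → η' = η) ↔
    (∃ h ∈ F, a ∈ h ∧ g ⊂ h ∧ ∀ f ∈ F, ¬(g ⊂ f ∧ f ⊂ h)) := by
    classical
  have hmin : ∀ f ∈ F, ∃ m ∈ minsF F, m ⊆ f := by
    intro f hf
    obtain ⟨m, hm, hmmin⟩ := (by obtain ⟨m, hm⟩ := Finset.exists_minimal (s := F.filter (· ⊆ f)) ⟨f, by simp [hf]⟩; exact ⟨m, hm.prop, fun x hx hlt => lt_irrefl x (hlt.trans_le (hm.le_of_le hx hlt.le))⟩ : ∃ m ∈ F.filter (· ⊆ f), ∀ x ∈ F.filter (· ⊆ f), ¬ x < m)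
    simp only [mem_filter] at hm
    refine ⟨m, ?_, hm.2⟩
    simp only [minsF, mem_filter]
    refine ⟨hm.1, fun z hz hzm => ?_⟩
    by_contra hne
    exact hmmin z (mem_filter.2 ⟨hz, hzm.trans hm.2⟩) (lt_of_le_of_ne hzm hne)
  have fib_iff : ∀ h : Finset α, h ∈ FibS F g ↔ (g ⊆ h ∧ ∀ f ∈ F, f ⊆ h → f ⊆ g) := by
    intro h
    constructor
    · rintro ⟨⟨m, hm, hmh⟩, hstar⟩
      have hsub : ∀ f ∈ F, f ⊆ h → f ⊆ g :=
        fun f hf hfh => hstar ▸ le_starOp hf hfh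
      have hgh : g ⊆ h := hstar ▸ starOp_le (fun f _ hfh => hfh)
      exact ⟨hgh, hsub⟩
    · rintro ⟨hgh, hsub⟩
      obtain ⟨m, hm, hmg⟩ := hmin g hg
      refine ⟨⟨m, hm, hmg.trans hgh⟩, ?_⟩
      exact subset_antisymm (starOp_le hsub) (le_starOp hg hgh)
  constructor
  · rintro ⟨η, hη, haη, hmax⟩
    obtain ⟨hgη, hηsub⟩ := (fib_iff η).1 hη
    -- insert a η not in Fib
    have hnot : ¬ (insert a η ∈ FibS F g) := by
      intro hmem
      have := hmax _ hmem (subset_insert a η)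
      exact haη (this ▸ mem_insert_self a η)
    rw [fib_iff] at hnot
    push_neg at hnot
    obtain ⟨f, hf, hfsub, hfg⟩ := hnot (hgη.trans (subset_insert a η))
    have haf : a ∈ f := by
      by_contra haf
      exact hfg (hηsub f hf ((subset_insert_iff_of_notMem haf).1 hfsub))
    -- the set T of F-members strictly above g inside insert a η
    set T := F.filter (fun h => g ⊂ h ∧ h ⊆ insert a η) with hT
    have hTne : T.Nonempty := by
      refine ⟨f ∪ g, mem_filter.2 ⟨hF f hf g hg, ?_, ?_⟩⟩
      · refine ssubset_iff_of_subset subset_union_right |>.2 ⟨a, ?_, hag⟩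
        exact mem_union_left _ haf
      · exact union_subset hfsub (hgη.trans (subset_insert a η))
    obtain ⟨h, hhT, hhmin⟩ := (by obtain ⟨m, hm⟩ := Finset.exists_minimal hTne; exact ⟨m, hm.prop, fun x hx hlt => lt_irrefl x (hlt.trans_le (hm.le_of_le hx hlt.le))⟩ : ∃ m ∈ T, ∀ x ∈ T, ¬ x < m)
    rw [hT, mem_filter] at hhT
    obtain ⟨hhF, hgh, hhsub⟩ := hhT
    have hah : a ∈ h := by
      by_contra hah
      have : h ⊆ η := (subset_insert_iff_of_notMem hah).1 hhsub
      exact hgh.not_subset (hηsub h hhF this)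
    refine ⟨h, hhF, hah, hgh, ?_⟩
    rintro f' hf' ⟨hgf', hf'h⟩
    exact hhmin f' (mem_filter.2 ⟨hf', hgf', hf'h.subset.trans hhsub⟩) hf'h
  · rintro ⟨h, hh, hah, hgh, hcov⟩
    set η₀ := g ∪ (h.erase a) with hη₀
    have haη₀ : a ∉ η₀ := by
      simp [hη₀, hag]
    have hη₀fib : η₀ ∈ FibS F g := by
      rw [fib_iff]
      refine ⟨subset_union_left, fun f hf hfη₀ => ?_⟩
      by_contra hfg
      have hfgF : f ∪ g ∈ F := hF f hf g hg
      have h1 : g ⊂ f ∪ g := ssubset_iff_of_subset subset_union_right |>.2 (by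
        obtain ⟨x, hxf, hxg⟩ := not_subset.1 hfg
        exact ⟨x, mem_union_left _ hxf, hxg⟩)
      have h2 : f ∪ g ⊂ h := by
        have hsub : f ∪ g ⊆ h :=
          union_subset (hfη₀.trans (union_subset hgh.subset (erase_subset a h))) hgh.subset
        refine ssubset_iff_of_subset hsub |>.2 ⟨a, hah, ?_⟩
        simp only [mem_union]
        rintro (hq | hq)
        · exact haη₀ (hfη₀ hq)
        · exact hag hq
      exact hcov (f ∪ g) hfgF ⟨h1, h2⟩
    set S := Finset.univ.filter (fun z : Finset α => z ∈ FibS F g ∧ a ∉ z ∧ η₀ ⊆ z) with hS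
    have hSne : S.Nonempty := ⟨η₀, by simp [hS, hη₀fib, haη₀]⟩
    obtain ⟨η, hηS, hηmax⟩ := (by obtain ⟨m, hm⟩ := Finset.exists_maximal hSne; exact ⟨m, hm.prop, fun x hx hlt => lt_irrefl m (hlt.trans_le (hm.le_of_ge hx hlt.le))⟩ : ∃ m ∈ S, ∀ x ∈ S, ¬ m < x)
    rw [hS, mem_filter] at hηS
    obtain ⟨-, hηfib, haη, hη₀η⟩ := hηS
    refine ⟨η, hηfib, haη, fun η' hη' hηη' => ?_⟩
    by_cases haη' : a ∈ η'
    · exfalso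
      have hhη' : h ⊆ η' := by
        intro x hx
        by_cases hxa : x = a
        · exact hxa ▸ haη'
        · exact hηη' (hη₀η (mem_union_right _ (mem_erase.2 ⟨hxa, hx⟩)))
      exact hgh.not_subset (((fib_iff η').1 hη').2 h hh hhη')
    · by_contra hne
      exact hηmax η' (by simp [hS, hη', haη', hη₀η.trans hηη']) (lt_of_le_of_ne hηη' (Ne.symm hne))
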